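/- Define, for x = (x₁, x₂) ∈ ℝ² with x ≠ 0 and r := ‖x‖: the real orthogonal matrix H(x) := (1/r)·[[x₁, −x₂], [x₂, x₁]], the diagonal complex matrix D_θ(r) := diag(β_θ(r)/α_θ(r), α_θ(r)/β_θ(r)), and the complex matrix A_θ(x) := H(x)·D_θ(r)·H(x)ᵀ. Then for every ε ∈ (0, π/4) there exists A₋ > 0 such that for all θ ∈ [ε, π/2 − ε], all x ∈ ℝ² with x ≠ 0, and all ξ ∈ ℂ²: Re(Σᵢ (A_θ(x)·ξ)ᵢ·conj(ξᵢ)) ≥ A₋·(|ξ₁|² + |ξ₂|²). (This is the strong ellipticity of the two-dimensional radial PML matrix, uniformly in the scaling angle θ.) -/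

import Mathlib

open Real Matrix

/-- The PML scaling factor `α_θ(r) = 1 + i f′(r) tan θ`. -/
noncomputable def pmlAlpha (f' : ℝ → ℝ) (θ r : ℝ) : ℂ :=
  1 + Complex.I * (f' r * Real.tan θ)

/-- The PML scaling factor `β_θ(r) = 1 + i (f(r)/r) tan θ`. -/
noncomputable def pmlBeta (f : ℝ → ℝ) (θ r : ℝ) : ℂ :=
  1 + Complex.I * (f r / r * Real.tan θ)

/-- The real orthogonal matrix `H(x) = (1/r) [[x₁, −x₂], [x₂, x₁]]`, regarded as a
complex matrix, where `r = ‖x‖`. -/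
noncomputable def pmlH (x : EuclideanSpace ℝ (Fin 2)) : Matrix (Fin 2) (Fin 2) ℂ :=
  !![((x 0 / ‖x‖ : ℝ) : ℂ), ((-(x 1) / ‖x‖ : ℝ) : ℂ);
     ((x 1 / ‖x‖ : ℝ) : ℂ), ((x 0 / ‖x‖ : ℝ) : ℂ)]

/-- The diagonal complex matrix `D_θ(r) = diag(β_θ(r)/α_θ(r), α_θ(r)/β_θ(r))`. -/
noncomputable def pmlD (f f' : ℝ → ℝ) (θ r : ℝ) : Matrix (Fin 2) (Fin 2) ℂ :=
  Matrix.diagonal ![pmlBeta f θ r / pmlAlpha f' θ r, pmlAlpha f' θ r / pmlBeta f θ r]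

/-- The two-dimensional radial PML matrix `A_θ(x) = H(x) D_θ(‖x‖) H(x)ᵀ`. -/
noncomputable def pmlA (f f' : ℝ → ℝ) (θ : ℝ) (x : EuclideanSpace ℝ (Fin 2)) :
    Matrix (Fin 2) (Fin 2) ℂ :=
  pmlH x * pmlD f f' θ ‖x‖ * (pmlH x)ᵀ

/-- Expansion of the quadratic form of `H diag(p,q) Hᵀ` with `H = [[c,−s],[s,c]]`. -/
lemma pml_quad_expand (c s : ℝ) (p q : ℂ) (ξ : Fin 2 → ℂ) :
    (∑ i, ((!![(c:ℂ), ((-s : ℝ):ℂ); (s:ℂ), (c:ℂ)] : Matrix (Fin 2) (Fin 2) ℂ)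
        * Matrix.diagonal ![p,q]
        * (!![(c:ℂ), ((-s : ℝ):ℂ); (s:ℂ), (c:ℂ)] : Matrix (Fin 2) (Fin 2) ℂ)ᵀ).mulVec ξ i
        * starRingEnd ℂ (ξ i))
    = (((c:ℂ)^2*p + (s:ℂ)^2*q) * ξ 0 * (starRingEnd ℂ) (ξ 0)
      + ((c:ℂ)*s*(p-q)) * ξ 1 * (starRingEnd ℂ) (ξ 0)
      + ((c:ℂ)*s*(p-q)) * ξ 0 * (starRingEnd ℂ) (ξ 1)
      + ((s:ℂ)^2*p + (c:ℂ)^2*q) * ξ 1 * (starRingEnd ℂ) (ξ 1)) := by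
  simp [Matrix.mulVec, Matrix.mul_apply, Fin.sum_univ_two, dotProduct,
    Matrix.diagonal, Matrix.transpose_apply, Matrix.vecHead, Matrix.vecTail, Function.comp]
  ring

/-- The real part of the quadratic form. -/
lemma pml_quad_re (c s : ℝ) (p q ξ₀ ξ₁ : ℂ) :
    (((c:ℂ)^2*p + (s:ℂ)^2*q) * ξ₀ * (starRingEnd ℂ) ξ₀
      + ((c:ℂ)*s*(p-q)) * ξ₁ * (starRingEnd ℂ) ξ₀
      + ((c:ℂ)*s*(p-q)) * ξ₀ * (starRingEnd ℂ) ξ₁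
      + ((s:ℂ)^2*p + (c:ℂ)^2*q) * ξ₁ * (starRingEnd ℂ) ξ₁).re
    = p.re * Complex.normSq ((c:ℂ)*ξ₀ + (s:ℂ)*ξ₁)
      + q.re * Complex.normSq ((s:ℂ)*ξ₀ - (c:ℂ)*ξ₁) := by
  simp only [Complex.normSq_apply, Complex.add_re, Complex.add_im, Complex.mul_re,
    Complex.mul_im, Complex.sub_re, Complex.sub_im, Complex.ofReal_re, Complex.ofReal_im,
    Complex.conj_re, Complex.conj_im, Complex.ofReal_pow, pow_two]
  ring_nf

/-- Lower bound on the real part of `(1+ib)/(1+ia)`. -/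
lemma pml_re_div_ge (a b K : ℝ) (ha : 0 ≤ a) (hb : 0 ≤ b) (haK : a ≤ K) :
    1/(1+K^2) ≤ ((1 + Complex.I*(b:ℂ))/(1 + Complex.I*(a:ℂ))).re := by
  have h1 : (1 + Complex.I*(b:ℂ)).re = 1 := by simp
  have h2 : (1 + Complex.I*(b:ℂ)).im = b := by simp
  have h3 : Complex.normSq (1 + Complex.I*(a:ℂ)) = 1 + a^2 := by
    simp [Complex.normSq_apply]; ring
  have hK : 0 ≤ K := le_trans ha haK
  have hpos : (0:ℝ) < 1 + a^2 := by positivity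
  have hpos' : (0:ℝ) < 1 + K^2 := by positivity
  have hre : ((1 + Complex.I*(b:ℂ))/(1 + Complex.I*(a:ℂ))).re = (1 + b*a)/(1+a^2) := by
    rw [Complex.div_re, h3, h1, h2]
    simp only [Complex.add_re, Complex.add_im, Complex.one_re, Complex.one_im,
      Complex.mul_re, Complex.mul_im, Complex.I_re, Complex.I_im, Complex.ofReal_re,
      Complex.ofReal_im]
    ring
  rw [hre, div_le_div_iff₀ hpos' hpos]
  nlinarith [mul_nonneg hb ha, mul_nonneg (mul_nonneg hb ha) (sq_nonneg K),
    mul_le_mul haK haK ha hK]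

/-- Sum of the two norm-squares. -/
lemma pml_normSq_sum (c s : ℝ) (h : c^2 + s^2 = 1) (ξ₀ ξ₁ : ℂ) :
    Complex.normSq ((c:ℂ)*ξ₀ + (s:ℂ)*ξ₁) + Complex.normSq ((s:ℂ)*ξ₀ - (c:ℂ)*ξ₁)
    = Complex.normSq ξ₀ + Complex.normSq ξ₁ := by
  simp only [Complex.normSq_apply, Complex.add_re, Complex.add_im, Complex.mul_re,
    Complex.mul_im, Complex.sub_re, Complex.sub_im, Complex.ofReal_re, Complex.ofReal_im]
  nlinarith [h, sq_nonneg ξ₀.re]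

/-- Strong ellipticity of the two-dimensional radial PML matrix,
uniformly in the scaling angle: for every `ε ∈ (0, π/4)` there is `A₋ > 0` such that
`Re⟨A_θ(x) ξ, ξ⟩ ≥ A₋ (|ξ₁|² + |ξ₂|²)` for all `θ ∈ [ε, π/2 − ε]`, `x ≠ 0`, `ξ ∈ ℂ²`. -/
theorem pml_matrix_strong_ellipticity_2d
    (R₁ R₂ : ℝ) (hR₁ : 0 < R₁) (hR₁₂ : R₁ < R₂)
    (f f' : ℝ → ℝ)
    (hderiv : ∀ r, HasDerivAt f (f' r) r)
    (hf'cont : Continuous f')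
    (hf0 : ∀ r ≤ R₁, f r = 0) (hf'0 : ∀ r ≤ R₁, f' r = 0)
    (hf'nonneg : ∀ r, 0 ≤ f' r)
    (hflin : ∀ r, R₂ ≤ r → f r = r) :
    ∀ ε : ℝ, 0 < ε → ε < π / 4 →
      ∃ Aminus : ℝ, 0 < Aminus ∧
        ∀ θ : ℝ, ε ≤ θ → θ ≤ π / 2 - ε →
          ∀ x : EuclideanSpace ℝ (Fin 2), x ≠ 0 →
            ∀ ξ : Fin 2 → ℂ,
              Aminus * (‖ξ 0‖ ^ 2 + ‖ξ 1‖ ^ 2)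
                ≤ (∑ i, (pmlA f f' θ x).mulVec ξ i * starRingEnd ℂ (ξ i)).re := by
  intro ε hε0 hε4
  -- f' r = 1 for r > R₂
  have hf'1 : ∀ r, R₂ < r → f' r = 1 := by
    intro r hr
    have hev : f =ᶠ[nhds r] id :=
      Filter.eventuallyEq_of_mem (Ioi_mem_nhds hr) (fun y hy => hflin y (le_of_lt hy))
    exact (hderiv r).unique ((hasDerivAt_id r).congr_of_eventuallyEq hev)
  -- uniform bound M for f'
  obtain ⟨y, hy, hymax⟩ := (isCompact_Icc (a := (0:ℝ)) (b := R₂)).exists_isMaxOn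
    (Set.nonempty_Icc.2 (by linarith)) hf'cont.continuousOn
  set M : ℝ := max (f' y) 1 with hMdef
  have hM1 : (1:ℝ) ≤ M := le_max_right _ _
  have hM0 : (0:ℝ) ≤ M := by linarith
  have hMb : ∀ r : ℝ, f' r ≤ M := by
    intro r
    rcases le_or_gt r R₂ with h | h
    · rcases le_or_gt 0 r with h0 | h0
      · exact le_trans (hymax ⟨h0, h⟩) (le_max_left _ _)
      · rw [hf'0 r (by linarith)]; linarith
    · rw [hf'1 r h]; exact hM1
  -- set T and Aminus
  set T : ℝ := Real.tan (π/2 - ε) with hTdef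
  have hπ : (0:ℝ) < π := Real.pi_pos
  have hT0 : 0 ≤ T := Real.tan_nonneg_of_nonneg_of_le_pi_div_two (by linarith) (by linarith)
  set K : ℝ := M * T with hKdef
  have hK0 : 0 ≤ K := mul_nonneg hM0 hT0
  refine ⟨1/(1+K^2), by positivity, ?_⟩
  intro θ hθ1 hθ2 x hx ξ
  -- positivity of r
  have hr : 0 < ‖x‖ := norm_pos_iff.2 hx
  set r : ℝ := ‖x‖ with hrdef
  -- bounds on tan θ
  have htan0 : 0 ≤ Real.tan θ :=
    Real.tan_nonneg_of_nonneg_of_le_pi_div_two (by linarith) (by linarith)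
  have htanT : Real.tan θ ≤ T := by
    rcases eq_or_lt_of_le hθ2 with h | h
    · rw [h]
    · exact le_of_lt (Real.tan_lt_tan_of_lt_of_lt_pi_div_two (by linarith) (by linarith) h)
  -- bound on f r / r via MVT
  have hslope : 0 ≤ f r / r ∧ f r / r ≤ M := by
    obtain ⟨cc, hcc, hs⟩ := exists_hasDerivAt_eq_slope f f' hr
      (fun y _ => (hderiv y).continuousAt.continuousWithinAt)
      (fun y _ => hderiv y)
    rw [hf0 0 (by linarith), sub_zero, sub_zero] at hs
    rw [← hs]
    exact ⟨hf'nonneg cc, hMb cc⟩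
  -- a and b
  set a : ℝ := f' r * Real.tan θ with hadef
  set b : ℝ := f r / r * Real.tan θ with hbdef
  have ha0 : 0 ≤ a := mul_nonneg (hf'nonneg r) htan0
  have hb0 : 0 ≤ b := mul_nonneg hslope.1 htan0
  have haK : a ≤ K := mul_le_mul (hMb r) htanT htan0 hM0
  have hbK : b ≤ K := mul_le_mul hslope.2 htanT htan0 hM0
  -- alpha and beta
  have hα : pmlAlpha f' θ r = 1 + Complex.I*(a:ℂ) := by
    rw [pmlAlpha, hadef]; push_cast; ring
  have hβ : pmlBeta f θ r = 1 + Complex.I*(b:ℂ) := by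
    rw [pmlBeta, hbdef]; push_cast; ring
  set p : ℂ := pmlBeta f θ r / pmlAlpha f' θ r with hpdef
  set q : ℂ := pmlAlpha f' θ r / pmlBeta f θ r with hqdef
  have hp : 1/(1+K^2) ≤ p.re := by
    rw [hpdef, hα, hβ]; exact pml_re_div_ge a b K ha0 hb0 haK
  have hq : 1/(1+K^2) ≤ q.re := by
    rw [hqdef, hα, hβ]; exact pml_re_div_ge b a K hb0 ha0 hbK
  -- c, s and orthogonality
  set c : ℝ := x 0 / ‖x‖ with hcdef
  set s : ℝ := x 1 / ‖x‖ with hsdef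
  have hnorm : ‖x‖^2 = (x 0)^2 + (x 1)^2 := by
    rw [EuclideanSpace.norm_eq]
    rw [Real.sq_sqrt (by positivity)]
    simp [Fin.sum_univ_two, sq_abs]
  have hcs : c^2 + s^2 = 1 := by
    rw [hcdef, hsdef, div_pow, div_pow, ← add_div, ← hnorm]
    field_simp
  -- rewrite the matrix
  have hH : pmlH x = !![(c:ℂ), ((-s : ℝ):ℂ); (s:ℂ), (c:ℂ)] := by
    rw [pmlH, hcdef, hsdef]
    norm_num [neg_div]
  have hA : pmlA f f' θ x
      = (!![(c:ℂ), ((-s : ℝ):ℂ); (s:ℂ), (c:ℂ)] : Matrix (Fin 2) (Fin 2) ℂ)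
        * Matrix.diagonal ![p, q]
        * (!![(c:ℂ), ((-s : ℝ):ℂ); (s:ℂ), (c:ℂ)] : Matrix (Fin 2) (Fin 2) ℂ)ᵀ := by
    rw [pmlA, hH, pmlD, hpdef, hqdef]
  rw [hA, pml_quad_expand, pml_quad_re]
  have hsum := pml_normSq_sum c s hcs (ξ 0) (ξ 1)
  have hn0 : 0 ≤ Complex.normSq ((c:ℂ)*(ξ 0) + (s:ℂ)*(ξ 1)) := Complex.normSq_nonneg _
  have hn1 : 0 ≤ Complex.normSq ((s:ℂ)*(ξ 0) - (c:ℂ)*(ξ 1)) := Complex.normSq_nonneg _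
  rw [Complex.sq_norm, Complex.sq_norm]
  have hApos : (0:ℝ) ≤ 1/(1+K^2) := by positivity
  nlinarith [mul_le_mul_of_nonneg_right hp hn0, mul_le_mul_of_nonneg_right hq hn1,
    mul_le_mul_of_nonneg_left (le_of_eq hsum.symm) hApos]
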